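/- arXiv:2512.06585 — 2 statements merged into one kernel-verified Lean document; each statement's English description precedes it below -/
import Mathlib

section
/- There exist universal constants κ > 0 and m₀ such that the following holds for all integers m ≥ m₀ and n with 2 ≤ n ≤ m^{1/3} and n | m, where k = m/n. For every integer z with 2^{√m} ≤ z ≤ 2^{2√m}: if X_1, …, X_z are independent random subsets of [m], each uniformly distributed among the subsets of [m] of size k, then the probability that there exists a set S ⊆ [m] with |S| = ⌈n·log₂ m⌉ such that S ⊄ [m]∖X_ℓ for every ℓ ∈ [z] is at most 2^{−κ√m}. -/
open Finset

lemma aux_choose_prod (m k : ℕ) :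
    ∀ s : ℕ, s + k ≤ m → m.choose k * (m - s - k)^s ≤ (m - s).choose k * m^s := by
  intro s
  induction s with
  | zero => simp
  | succ s ih =>
    intro h
    have ih' := ih (by omega)
    have hid := Nat.choose_mul_succ_eq (m - s - 1) k
    have h1 : m - s - 1 + 1 = m - s := by omega
    rw [h1] at hid
    have e1 : m - (s+1) - k = m - s - 1 - k := by omega
    have e2 : m - (s+1) = m - s - 1 := by omega
    rw [e1, e2]
    calc m.choose k * (m - s - 1 - k) ^ (s+1)
        = (m.choose k * (m - s - 1 - k)^s) * (m - s - 1 - k) := by ring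
      _ ≤ (m.choose k * (m - s - k)^s) * (m - s - 1 - k) :=
          Nat.mul_le_mul (Nat.mul_le_mul le_rfl (Nat.pow_le_pow_left (by omega) s)) le_rfl
      _ ≤ ((m - s).choose k * m^s) * (m - s - 1 - k) := Nat.mul_le_mul ih' le_rfl
      _ = ((m - s).choose k * (m - s - 1 - k)) * m^s := by ring
      _ ≤ ((m - s).choose k * (m - s - k)) * m^s :=
          Nat.mul_le_mul (Nat.mul_le_mul le_rfl (by omega)) le_rfl
      _ = ((m - s - 1).choose k * (m - s)) * m^s := by rw [← hid]
      _ ≤ ((m - s - 1).choose k * m) * m^s :=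
          Nat.mul_le_mul (Nat.mul_le_mul le_rfl (by omega)) le_rfl
      _ = (m - s - 1).choose k * m^(s+1) := by ring

lemma aux_count_M (m k : ℕ) (S : Finset (Fin m)) :
    (univ.filter (fun X : {t : Finset (Fin m) // t.card = k} => S ⊆ X.1ᶜ)).card
      = (m - S.card).choose k := by
  classical
  have : (univ.filter (fun X : {t : Finset (Fin m) // t.card = k} => S ⊆ X.1ᶜ)).card
      = (Sᶜ.powersetCard k).card := by
    apply Finset.card_bij (fun X _ => X.1)
    · intro X hX
      simp only [mem_filter, mem_univ, true_and] at hX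
      rw [Finset.mem_powersetCard]
      constructor
      · intro x hx
        by_contra hc
        have := hX (by simpa using hc)
        simp at this
        exact this hx
      · exact X.2
    · intro X hX Y hY hxy
      exact Subtype.ext hxy
    · intro T hT
      rw [Finset.mem_powersetCard] at hT
      refine ⟨⟨T, hT.2⟩, ?_, rfl⟩
      simp only [mem_filter, mem_univ, true_and]
      intro x hx
      simp only [Finset.mem_compl]
      intro hc
      have := hT.1 hc
      simp at this
      exact this hx
  rw [this, Finset.card_powersetCard, Finset.card_compl, Fintype.card_fin]


lemma aux_union_bound (m k z s : ℕ) :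
    (Finset.univ.filter
        (fun Xf : Fin z → {t : Finset (Fin m) // t.card = k} =>
          ∃ S : Finset (Fin m), S.card = s ∧ ∀ ℓ : Fin z, ¬ S ⊆ ((Xf ℓ).1)ᶜ)).card
      ≤ m.choose s * (m.choose k - (m - s).choose k)^z := by
  classical
  set α := {t : Finset (Fin m) // t.card = k} with hα
  have hsub : (univ.filter (fun Xf : Fin z → α =>
        ∃ S : Finset (Fin m), S.card = s ∧ ∀ ℓ, ¬ S ⊆ ((Xf ℓ).1)ᶜ))
      ⊆ (Finset.powersetCard s (univ : Finset (Fin m))).biUnion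
          (fun S => univ.filter (fun Xf : Fin z → α => ∀ ℓ, ¬ S ⊆ ((Xf ℓ).1)ᶜ)) := by
    intro Xf hXf
    simp only [mem_filter, mem_univ, true_and] at hXf
    obtain ⟨S, hS, hall⟩ := hXf
    apply Finset.mem_biUnion.2
    refine ⟨S, by simp [Finset.mem_powersetCard_univ, hS], ?_⟩
    simp only [mem_filter, mem_univ, true_and]
    exact hall
  refine (Finset.card_le_card hsub).trans (Finset.card_biUnion_le.trans ?_)
  have hcard : ∀ S ∈ Finset.powersetCard s (univ : Finset (Fin m)),
      (univ.filter (fun Xf : Fin z → α => ∀ ℓ, ¬ S ⊆ ((Xf ℓ).1)ᶜ)).card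
        = (m.choose k - (m - s).choose k)^z := by
    intro S hS
    have hSc : S.card = s := (Finset.mem_powersetCard_univ).1 hS
    have hEq : univ.filter (fun Xf : Fin z → α => ∀ ℓ, ¬ S ⊆ ((Xf ℓ).1)ᶜ)
        = Fintype.piFinset (fun _ : Fin z => univ.filter (fun X : α => ¬ S ⊆ X.1ᶜ)) := by
      ext Xf
      simp [Fintype.mem_piFinset]
    rw [hEq, Fintype.card_piFinset]
    have h2 : (univ.filter (fun X : α => ¬ S ⊆ X.1ᶜ)).card
        = m.choose k - (m - s).choose k := by
      have h3 := Finset.card_filter_add_card_filter_not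
        (s := (univ : Finset α)) (fun X : α => S ⊆ X.1ᶜ)
      have hM := aux_count_M m k S
      rw [hSc] at hM
      have hN : (univ : Finset α).card = m.choose k := by
        rw [Finset.card_univ]
        exact (Fintype.card_finset_len (α := Fin m) k).trans (by rw [Fintype.card_fin])
      rw [← hN, ← hM]
      exact Nat.eq_sub_of_add_eq' h3
    simp [h2]
  rw [Finset.sum_congr rfl hcard, Finset.sum_const, Finset.card_powersetCard,
    Finset.card_univ, Fintype.card_fin, smul_eq_mul]

lemma aux_exp_sq {y : ℝ} (hy : 0 ≤ y) : y^2/4 ≤ Real.exp y := by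
  have h := Real.add_one_le_exp (y/2)
  have h2 : (y/2+1)^2 ≤ (Real.exp (y/2))^2 := pow_le_pow_left₀ (by linarith) h 2
  have h3 : Real.exp (y/2) * Real.exp (y/2) = Real.exp y := by
    rw [← Real.exp_add]; ring_nf
  nlinarith [h2, h3]

lemma aux_tail {t : ℝ} (ht : 100000 ≤ t) :
    (2:ℝ)^(t/8) * Real.exp (-((2:ℝ)^(t/2))) ≤ (2:ℝ)^(-t) := by
  have hl1 := Real.log_two_gt_d9
  have hl2 := Real.log_two_lt_d9
  have hX : ((2:ℝ)^(t/2)) = Real.exp (Real.log 2 * (t/2)) :=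
    Real.rpow_def_of_pos two_pos _
  have hXge : (Real.log 2 * (t/2))^2/4 ≤ (2:ℝ)^(t/2) := by
    rw [hX]
    exact aux_exp_sq (by nlinarith)
  have claim1 : (2:ℝ)^(t/8 + t) ≤ Real.exp ((2:ℝ)^(t/2)) := by
    rw [Real.rpow_def_of_pos two_pos]
    apply Real.exp_le_exp.2
    have hu : (69000:ℝ) ≤ Real.log 2 * t := by nlinarith
    have key : Real.log 2 * (t/8 + t) ≤ (Real.log 2 * (t/2))^2/4 := by
      nlinarith [hu, sq_nonneg (Real.log 2 * t - 69000)]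
    linarith [hXge, key]
  have hpos : (0:ℝ) < (2:ℝ)^t := Real.rpow_pos_of_pos two_pos t
  have hneg : (2:ℝ)^(-t) = ((2:ℝ)^t)⁻¹ := Real.rpow_neg two_pos.le t
  rw [hneg, inv_eq_one_div, le_div_iff₀ hpos]
  have h2t : (2:ℝ)^(t/8) * (2:ℝ)^t = (2:ℝ)^(t/8+t) := (Real.rpow_add two_pos _ _).symm
  calc (2:ℝ)^(t/8) * Real.exp (-((2:ℝ)^(t/2))) * (2:ℝ)^t
      = ((2:ℝ)^(t/8) * (2:ℝ)^t) * Real.exp (-((2:ℝ)^(t/2))) := by ring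
    _ = (2:ℝ)^(t/8+t) * Real.exp (-((2:ℝ)^(t/2))) := by rw [h2t]
    _ ≤ Real.exp ((2:ℝ)^(t/2)) * Real.exp (-((2:ℝ)^(t/2))) := by
        exact mul_le_mul_of_nonneg_right claim1 (Real.exp_nonneg _)
    _ = 1 := by rw [← Real.exp_add]; simp

/-- Small-set coverage of random complements: there are universal constants `κ > 0` and
`m₀` such that for all `m ≥ m₀`, `2 ≤ n ≤ m^{1/3}` with `n ∣ m`, `k = m/n`, and every
`z` with `2^{√m} ≤ z ≤ 2^{2√m}`: if `X_1, …, X_z` are i.i.d. uniformly random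
`k`-subsets of `[m]`, the probability that some set `S` of size `⌈n·log₂ m⌉` is
contained in none of the complements `[m]∖X_ℓ` is at most `2^{−κ√m}`. -/
theorem small_coverage_whp :
    ∃ κ : ℝ, 0 < κ ∧ ∃ m₀ : ℕ, ∀ m : ℕ, m₀ ≤ m → ∀ n : ℕ, 2 ≤ n →
      (n : ℝ) ≤ (m : ℝ) ^ ((1 : ℝ) / 3) → n ∣ m →
      ∀ z : ℕ, 2 ^ (Real.sqrt m) ≤ (z : ℝ) → (z : ℝ) ≤ 2 ^ (2 * Real.sqrt m) →
      ((Finset.univ.filter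
          (fun Xf : Fin z → {s : Finset (Fin m) // s.card = m / n} =>
            ∃ S : Finset (Fin m), S.card = ⌈(n : ℝ) * Real.logb 2 m⌉₊ ∧
              ∀ ℓ : Fin z, ¬ S ⊆ ((Xf ℓ).1)ᶜ)).card : ℝ) /
        (Fintype.card (Fin z → {s : Finset (Fin m) // s.card = m / n}) : ℝ) ≤
      2 ^ (-(κ * Real.sqrt m)) := by
  refine ⟨1, one_pos, 10^50, ?_⟩
  intro m hm0 n hn2 hn13 hdvd z hz1 hz2
  classical
  set k : ℕ := m / n with hk
  set s : ℕ := ⌈(n : ℝ) * Real.logb 2 m⌉₊ with hs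
  have hm1 : (1:ℕ) ≤ m := le_trans (by norm_num) hm0
  have hmR : (1:ℝ) ≤ (m:ℝ) := by exact_mod_cast hm1
  have hmpos : (0:ℝ) < m := by linarith
  have hmge : ((10:ℝ)^50) ≤ (m:ℝ) := by exact_mod_cast hm0
  have hrp : ∀ a b : ℝ, a ≤ b → (m:ℝ)^a ≤ (m:ℝ)^b := fun a b hab =>
    Real.rpow_le_rpow_of_exponent_le hmR hab
  have h1le : ∀ a : ℝ, 0 ≤ a → (1:ℝ) ≤ (m:ℝ)^a := fun a ha => by
    calc (1:ℝ) = (1:ℝ)^a := (Real.one_rpow a).symm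
    _ ≤ (m:ℝ)^a := Real.rpow_le_rpow zero_le_one hmR ha
  have h10 : (100000:ℝ) ≤ (m:ℝ)^((1:ℝ)/10) := by
    have h1 : ((100000:ℝ))^(10:ℕ) ≤ (m:ℝ) := by norm_num; linarith [hmge]
    calc (100000:ℝ) = (((100000:ℝ)^(10:ℕ))^((1:ℝ)/10)) := by
          rw [← Real.rpow_natCast (100000:ℝ) 10, ← Real.rpow_mul (by norm_num)]
          norm_num
      _ ≤ (m:ℝ)^((1:ℝ)/10) := Real.rpow_le_rpow (by positivity) h1 (by norm_num)
  have hlogb0 : 0 ≤ Real.logb 2 m := Real.logb_nonneg one_lt_two hmR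
  have hlog : Real.logb 2 m ≤ 44 * (m:ℝ)^((1:ℝ)/30) := by
    have h30 : Real.log ((m:ℝ)^((1:ℝ)/30)) = (1/30) * Real.log m :=
      Real.log_rpow hmpos _
    have hle : Real.log ((m:ℝ)^((1:ℝ)/30)) ≤ (m:ℝ)^((1:ℝ)/30) := by
      have := Real.log_le_sub_one_of_pos (Real.rpow_pos_of_pos hmpos ((1:ℝ)/30))
      linarith
    have hlog2 := Real.log_two_gt_d9
    rw [Real.logb, div_le_iff₀ (by linarith : (0:ℝ) < Real.log 2)]
    nlinarith [h1le ((1:ℝ)/30) (by norm_num)]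
  have hsle : (s:ℝ) ≤ 45 * (m:ℝ)^((11:ℝ)/30) := by
    have hceil : (s:ℝ) < (n:ℝ) * Real.logb 2 m + 1 := by
      rw [hs]; exact Nat.ceil_lt_add_one (by positivity)
    have hmm : (m:ℝ)^((1:ℝ)/3) * ((m:ℝ)^((1:ℝ)/30)) = (m:ℝ)^((11:ℝ)/30) := by
      rw [← Real.rpow_add hmpos]; norm_num
    have hx : (n:ℝ) * Real.logb 2 m ≤ 44 * (m:ℝ)^((11:ℝ)/30) := by
      calc (n:ℝ) * Real.logb 2 m
          ≤ (m:ℝ)^((1:ℝ)/3) * (44 * (m:ℝ)^((1:ℝ)/30)) :=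
            mul_le_mul hn13 hlog hlogb0 (Real.rpow_nonneg hmpos.le _)
        _ = 44 * ((m:ℝ)^((1:ℝ)/3) * (m:ℝ)^((1:ℝ)/30)) := by ring
        _ = 44 * (m:ℝ)^((11:ℝ)/30) := by rw [hmm]
    have h1 : (1:ℝ) ≤ (m:ℝ)^((11:ℝ)/30) := h1le _ (by norm_num)
    linarith
  -- k bounds
  have hn0 : 0 < n := by omega
  have hkn : k * n = m := Nat.div_mul_cancel hdvd
  have h2k : 2 * k ≤ m := by
    calc 2 * k = k * 2 := by ring
    _ ≤ k * n := Nat.mul_le_mul_left k hn2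
    _ = m := hkn
  have hkm : k ≤ m := by omega
  have hk2R : (k:ℝ) ≤ (m:ℝ)/2 := by
    have : ((2*k:ℕ):ℝ) ≤ (m:ℝ) := by exact_mod_cast h2k
    push_cast at this; linarith
  have hs4 : (s:ℝ) ≤ (m:ℝ)/4 := by
    have hmm : (m:ℝ)^((11:ℝ)/30) * (m:ℝ)^((19:ℝ)/30) = (m:ℝ) := by
      rw [← Real.rpow_add hmpos]; norm_num
    have hA : (0:ℝ) ≤ (m:ℝ)^((11:ℝ)/30) := (Real.rpow_pos_of_pos hmpos _).le
    have hB : (180:ℝ) ≤ (m:ℝ)^((19:ℝ)/30) :=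
      le_trans (show (180:ℝ) ≤ (m:ℝ)^((1:ℝ)/10) by linarith)
        (hrp ((1:ℝ)/10) ((19:ℝ)/30) (by norm_num))
    have h180 : (m:ℝ)^((11:ℝ)/30) * 180 ≤ (m:ℝ)^((11:ℝ)/30) * (m:ℝ)^((19:ℝ)/30) :=
      mul_le_mul_of_nonneg_left hB hA
    rw [hmm] at h180
    linarith
  have hsk : (s:ℝ) + (k:ℝ) ≤ 3/4 * m := by linarith
  have hskm : s + k ≤ m := by
    have h1 : ((s+k:ℕ):ℝ) ≤ (m:ℝ) := by push_cast; linarith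
    exact_mod_cast h1
  -- N, M, p
  set N : ℕ := m.choose k with hN
  set M : ℕ := (m - s).choose k with hM
  have hN0 : 0 < N := Nat.choose_pos hkm
  have hMN : M ≤ N := Nat.choose_le_choose k (Nat.sub_le m s)
  set p : ℝ := (M:ℝ)/(N:ℝ) with hp
  have hNR : (0:ℝ) < N := by exact_mod_cast hN0
  have hchoose := aux_choose_prod m k s hskm
  rw [← hN, ← hM] at hchoose
  have hcge : (m:ℝ) ≤ 4 * ((m - s - k:ℕ):ℝ) := by
    have he : m - s - k = m - (s+k) := by omega
    rw [he, Nat.cast_sub hskm]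
    push_cast; linarith
  have hppow : ((1:ℝ)/4)^s ≤ p := by
    have hcast : (N:ℝ) * (((m - s - k:ℕ):ℝ))^s ≤ (M:ℝ) * ((m:ℝ))^s := by
      exact_mod_cast hchoose
    have hms : (0:ℝ) < (m:ℝ)^(s:ℕ) := by positivity
    have h14 : ((1:ℝ)/4)^s * (m:ℝ)^s ≤ (((m - s - k:ℕ):ℝ))^s := by
      rw [← mul_pow]
      apply pow_le_pow_left₀ (by positivity)
      linarith
    have hcomb : ((1:ℝ)/4)^s * (N:ℝ) * (m:ℝ)^s ≤ (M:ℝ) * (m:ℝ)^s := by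
      calc ((1:ℝ)/4)^s * (N:ℝ) * (m:ℝ)^s
          = (N:ℝ) * (((1:ℝ)/4)^s * (m:ℝ)^s) := by ring
        _ ≤ (N:ℝ) * (((m - s - k:ℕ):ℝ))^s := mul_le_mul_of_nonneg_left h14 hNR.le
        _ ≤ (M:ℝ) * (m:ℝ)^s := hcast
    have h5 : ((1:ℝ)/4)^s * (N:ℝ) ≤ (M:ℝ) := le_of_mul_le_mul_right hcomb hms
    rw [hp, le_div_iff₀ hNR]
    linarith
  -- sqrt facts
  set t : ℝ := Real.sqrt m with htdef
  have htr : t = (m:ℝ)^((1:ℝ)/2) := Real.sqrt_eq_rpow _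
  have ht1e5 : (100000:ℝ) ≤ t := by
    rw [htr]; exact le_trans h10 (hrp ((1:ℝ)/10) ((1:ℝ)/2) (by norm_num))
  have h4s : 4*(s:ℝ) ≤ t := by
    rw [htr]
    have hmm : (m:ℝ)^((11:ℝ)/30) * (m:ℝ)^((2:ℝ)/15) = (m:ℝ)^((1:ℝ)/2) := by
      rw [← Real.rpow_add hmpos]; norm_num
    have hA : (0:ℝ) ≤ (m:ℝ)^((11:ℝ)/30) := (Real.rpow_pos_of_pos hmpos _).le
    have hB : (180:ℝ) ≤ (m:ℝ)^((2:ℝ)/15) :=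
      le_trans (show (180:ℝ) ≤ (m:ℝ)^((1:ℝ)/10) by linarith)
        (hrp ((1:ℝ)/10) ((2:ℝ)/15) (by norm_num))
    have h180 : (m:ℝ)^((11:ℝ)/30) * 180 ≤ (m:ℝ)^((11:ℝ)/30) * (m:ℝ)^((2:ℝ)/15) :=
      mul_le_mul_of_nonneg_left hB hA
    rw [hmm] at h180
    linarith
  have hslog : (s:ℝ) * Real.logb 2 m ≤ t/8 := by
    have hmm : (m:ℝ)^((11:ℝ)/30) * (m:ℝ)^((1:ℝ)/30) = (m:ℝ)^((2:ℝ)/5) := by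
      rw [← Real.rpow_add hmpos]; norm_num
    have hmm2 : (m:ℝ)^((2:ℝ)/5) * (m:ℝ)^((1:ℝ)/10) = (m:ℝ)^((1:ℝ)/2) := by
      rw [← Real.rpow_add hmpos]; norm_num
    have hC : (0:ℝ) ≤ (m:ℝ)^((2:ℝ)/5) := (Real.rpow_pos_of_pos hmpos _).le
    have hmul : (s:ℝ) * Real.logb 2 m ≤ 1980 * (m:ℝ)^((2:ℝ)/5) := by
      calc (s:ℝ) * Real.logb 2 m
          ≤ (45 * (m:ℝ)^((11:ℝ)/30)) * (44 * (m:ℝ)^((1:ℝ)/30)) :=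
            mul_le_mul hsle hlog hlogb0 (by positivity)
        _ = 1980 * ((m:ℝ)^((11:ℝ)/30) * (m:ℝ)^((1:ℝ)/30)) := by ring
        _ = 1980 * (m:ℝ)^((2:ℝ)/5) := by rw [hmm]
    have h1e5 : (m:ℝ)^((2:ℝ)/5) * 100000 ≤ (m:ℝ)^((2:ℝ)/5) * (m:ℝ)^((1:ℝ)/10) :=
      mul_le_mul_of_nonneg_left h10 hC
    rw [hmm2] at h1e5
    rw [htr]
    linarith
  -- z * p
  have hz0 : (0:ℝ) ≤ (z:ℝ) := Nat.cast_nonneg z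
  have hzp : (2:ℝ)^(t/2) ≤ (z:ℝ) * p := by
    have h14s : ((1:ℝ)/4)^s = (2:ℝ)^(-(2*(s:ℝ))) := by
      have h1 : (2:ℝ)^(-(2*(s:ℝ))) = ((2:ℝ)^((2*(s:ℝ))))⁻¹ := Real.rpow_neg two_pos.le _
      have h2 : (2:ℝ)^((2*(s:ℝ))) = ((2:ℝ)^(((2*s:ℕ)):ℝ)) := by push_cast; ring_nf
      have h3 : ((2:ℝ)^(((2*s:ℕ)):ℝ)) = (2:ℝ)^(2*s:ℕ) := Real.rpow_natCast 2 (2*s)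
      rw [h1, h2, h3, pow_mul, ← inv_pow]
      norm_num
    have hzpge : (2:ℝ)^t * ((1:ℝ)/4)^s ≤ (z:ℝ) * p :=
      mul_le_mul hz1 hppow (by positivity) hz0
    have hcomb2 : (2:ℝ)^t * (2:ℝ)^(-(2*(s:ℝ))) = (2:ℝ)^(t - 2*(s:ℝ)) := by
      rw [← Real.rpow_add two_pos]; ring_nf
    have hexp : (2:ℝ)^(t/2) ≤ (2:ℝ)^(t - 2*(s:ℝ)) :=
      Real.rpow_le_rpow_of_exponent_le one_le_two (by linarith)
    calc (2:ℝ)^(t/2) ≤ (2:ℝ)^(t - 2*(s:ℝ)) := hexp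
      _ = (2:ℝ)^t * ((1:ℝ)/4)^s := by rw [h14s, hcomb2]
      _ ≤ (z:ℝ) * p := hzpge
  -- denominator
  have hD : (Fintype.card (Fin z → {x : Finset (Fin m) // x.card = k}) : ℝ) = (N:ℝ)^z := by
    rw [Fintype.card_fun, Fintype.card_finset_len, Fintype.card_fin, Fintype.card_fin]
    push_cast
    rw [hN]
  rw [hD, one_mul]
  have hNz : (0:ℝ) < (N:ℝ)^z := by positivity
  have hbadR : ((Finset.univ.filter
      (fun Xf : Fin z → {x : Finset (Fin m) // x.card = k} =>
        ∃ S : Finset (Fin m), S.card = s ∧ ∀ ℓ : Fin z, ¬ S ⊆ ((Xf ℓ).1)ᶜ)).card : ℝ)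
      ≤ (m.choose s : ℝ) * ((N:ℝ) - (M:ℝ))^z := by
    have hb := aux_union_bound m k z s
    rw [← hN, ← hM] at hb
    calc ((Finset.univ.filter _).card : ℝ)
        ≤ ((m.choose s * (N - M)^z : ℕ):ℝ) := by exact_mod_cast hb
      _ = (m.choose s : ℝ) * ((N:ℝ) - (M:ℝ))^z := by
          push_cast [Nat.cast_sub hMN]; ring
  have h1p0 : 0 ≤ 1 - p := by
    have hMR : (M:ℝ) ≤ (N:ℝ) := by exact_mod_cast hMN
    have : p ≤ 1 := by rw [hp, div_le_one hNR]; exact hMR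
    linarith
  have hstep1 : (1-p)^z ≤ Real.exp (-((z:ℝ)*p)) := by
    have h1 : 1 - p ≤ Real.exp (-p) := by
      have := Real.add_one_le_exp (-p); linarith
    calc (1-p)^z ≤ (Real.exp (-p))^z := pow_le_pow_left₀ h1p0 h1 z
      _ = Real.exp ((z:ℝ)*(-p)) := (Real.exp_nat_mul _ z).symm
      _ = Real.exp (-((z:ℝ)*p)) := by ring_nf
  have hstep2 : Real.exp (-((z:ℝ)*p)) ≤ Real.exp (-((2:ℝ)^(t/2))) := by
    apply Real.exp_le_exp.2; linarith
  have hstep3 : (m.choose s : ℝ) ≤ (2:ℝ)^(t/8) := by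
    have hms2 : (m:ℝ)^(s:ℕ) = (2:ℝ)^((Real.logb 2 m) * (s:ℝ)) := by
      conv_lhs => rw [← Real.rpow_logb two_pos (by norm_num) hmpos]
      rw [← Real.rpow_natCast ((2:ℝ)^(Real.logb 2 m)) s, ← Real.rpow_mul two_pos.le]
    calc (m.choose s : ℝ) ≤ ((m^s : ℕ):ℝ) := by exact_mod_cast Nat.choose_le_pow m s
      _ = (m:ℝ)^(s:ℕ) := by push_cast; rfl
      _ = (2:ℝ)^((Real.logb 2 m) * (s:ℝ)) := hms2
      _ ≤ (2:ℝ)^(t/8) := by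
          apply Real.rpow_le_rpow_of_exponent_le one_le_two
          calc Real.logb 2 m * (s:ℝ) = (s:ℝ) * Real.logb 2 m := by ring
            _ ≤ t/8 := hslog
  have h1p : ((N:ℝ)-(M:ℝ))/(N:ℝ) = 1 - p := by
    rw [hp, sub_div, div_self hNR.ne']
  calc ((Finset.univ.filter
      (fun Xf : Fin z → {x : Finset (Fin m) // x.card = k} =>
        ∃ S : Finset (Fin m), S.card = s ∧ ∀ ℓ : Fin z, ¬ S ⊆ ((Xf ℓ).1)ᶜ)).card : ℝ) / (N:ℝ)^z
      ≤ ((m.choose s : ℝ) * ((N:ℝ) - (M:ℝ))^z) / (N:ℝ)^z := by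
        gcongr
    _ = (m.choose s : ℝ) * (1-p)^z := by
        rw [mul_div_assoc, ← div_pow, h1p]
    _ ≤ (2:ℝ)^(t/8) * Real.exp (-((2:ℝ)^(t/2))) :=
        mul_le_mul hstep3 (hstep1.trans hstep2) (pow_nonneg h1p0 z) (by positivity)
    _ ≤ (2:ℝ)^(-t) := aux_tail ht1e5
end

section
/- Let n ≥ 2, c ≥ 1, z ≥ 1 be integers, set ε = n^{-1/3} and assume ε³n = 1 (which holds by definition of ε). Let R be a finite set and M = R × [c]. Suppose S_1, …, S_z ⊆ [c], each of size at most εc, satisfy: for every S ⊆ [c] and every L ⊆ [z] with |L| = n, Σ_{ℓ∈L} |S ∩ S_ℓ| ≤ (|S|/c + 3ε)·εnc. Let X_1, …, X_n ⊆ [z] be pairwise disjoint and nonempty. Let λ ≥ 1 and let f_1, …, f_n : 2^R → ℝ≥0 be monotone functions with f_i(∅) = 0 such that for every T ⊆ [n] and every tuple (B_i)_{i∈T} of pairwise disjoint subsets of R, Σ_{i∈T} f_i(B_i) ≤ (|T| + 1)/λ. For A ⊆ M define v_i(A) = λ · max_{ℓ∈X_i} Σ_{j∈S_ℓ} f_i(A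 ∩ (R × {j})) for i ∈ [n], and u_j(A) = εn · 1[A ⊇ R × {j}] for j ∈ [c]. Then for every tuple (A_1, …, A_n, A'_1, …, A'_c) of pairwise disjoint subsets of M, Σ_{i∈[n]} v_i(A_i) + Σ_{j∈[c]} u_j(A'_j) ≤ (1 + 3ε + ε²)·εnc. -/
/-- The welfare bound for 0-instances in the `SA ∪ SM` hardness construction.  Items are
`M = R × [c]` (columns `R × {j}`).  The sets `S_ℓ ⊆ [c]` have size at most `εc` and
satisfy the scattering property of the hard column sets; `X_1, …, X_n ⊆ [z]` are
pairwise disjoint and nonempty; the `f_i : 2^R → ℝ≥0` are monotone with `f_i(∅) = 0` and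
form a 0-instance of the gap welfare problem (every partial allocation among a subset
`T` of bidders has welfare at most `(|T|+1)/λ`).  With
`v_i(A) = λ·max_{ℓ∈X_i} Σ_{j∈S_ℓ} f_i(A ∩ (R×{j}))` and
`u_j(A) = εn·1[A ⊇ R×{j}]`, every allocation of pairwise disjoint subsets of `M` to the
`n` `V`-type bidders and `c` single-minded bidders has total welfare at most
`(1 + 3ε + ε²)·εnc`. -/
theorem zero_instance_welfare_bound
    (n c z : ℕ) (hn : 2 ≤ n) (hc : 1 ≤ c) (hz : 1 ≤ z)
    (ε : ℝ) (hε : ε = (n : ℝ) ^ (-(1 / 3) : ℝ)) (hε3 : ε ^ 3 * n = 1)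
    {R : Type*} [Fintype R] [DecidableEq R]
    (S : Fin z → Finset (Fin c))
    (hScard : ∀ ℓ, ((S ℓ).card : ℝ) ≤ ε * c)
    (hS : ∀ (T : Finset (Fin c)) (L : Finset (Fin z)), L.card = n →
      (∑ ℓ ∈ L, ((T ∩ S ℓ).card : ℝ)) ≤ ((T.card : ℝ) / c + 3 * ε) * (ε * n * c))
    (X : Fin n → Finset (Fin z))
    (hXdisj : ∀ i j, i ≠ j → Disjoint (X i) (X j))
    (hXne : ∀ i, (X i).Nonempty)
    (lam : ℝ) (hlam : 1 ≤ lam)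
    (f : Fin n → Finset R → ℝ)
    (hf0 : ∀ i, f i ∅ = 0)
    (hfnn : ∀ i A, 0 ≤ f i A)
    (hfmono : ∀ i (A B : Finset R), A ⊆ B → f i A ≤ f i B)
    (hgap : ∀ (T : Finset (Fin n)) (B : Fin n → Finset R),
      (∀ i ∈ T, ∀ j ∈ T, i ≠ j → Disjoint (B i) (B j)) →
      ∑ i ∈ T, f i (B i) ≤ ((T.card : ℝ) + 1) / lam)
    (A : Fin n → Finset (R × Fin c)) (A' : Fin c → Finset (R × Fin c))
    (hAA : ∀ i j, i ≠ j → Disjoint (A i) (A j))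
    (hA'A' : ∀ i j, i ≠ j → Disjoint (A' i) (A' j))
    (hAA' : ∀ i j, Disjoint (A i) (A' j)) :
    (∑ i : Fin n, lam * (X i).sup' (hXne i) (fun ℓ =>
        ∑ j ∈ S ℓ, f i (((A i).filter (fun x => x.2 = j)).image Prod.fst))) +
      (∑ j : Fin c, ε * n *
        (if (Finset.univ.image (fun r : R => (r, j))) ⊆ A' j then (1 : ℝ) else 0)) ≤
    (1 + 3 * ε + ε ^ 2) * (ε * n * c) := by
  classical
  have hn0 : (0:ℝ) < n := by
    have : (0:ℕ) < n := by omega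
    exact_mod_cast this
  have hc0 : (0:ℝ) < c := by
    have : (0:ℕ) < c := by omega
    exact_mod_cast this
  have hε0 : 0 < ε := by rw [hε]; exact Real.rpow_pos_of_pos hn0 _
  have hlam0 : 0 < lam := lt_of_lt_of_le one_pos hlam
  set P : Fin n → Fin c → Finset R :=
    fun i j => ((A i).filter (fun x => x.2 = j)).image Prod.fst with hPdef
  -- choose maximizers ℓ i ∈ X i
  have hch : ∀ i : Fin n, ∃ l ∈ X i,
      (X i).sup' (hXne i) (fun l => ∑ j ∈ S l, f i (P i j)) = ∑ j ∈ S l, f i (P i j) :=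
    fun i => Finset.exists_mem_eq_sup' (hXne i) _
  choose ℓ hℓmem hℓval using hch
  have hℓinj : Function.Injective ℓ := by
    intro i i' h
    by_contra hne
    exact (Finset.disjoint_left.1 (hXdisj i i' hne)) (hℓmem i) (h ▸ hℓmem i')
  set C : Finset (Fin c) :=
    Finset.univ.filter (fun j => (Finset.univ.image fun r : R => (r, j)) ⊆ A' j) with hCdef
  set T : Fin c → Finset (Fin n) :=
    fun j => Finset.univ.filter (fun i => j ∈ S (ℓ i)) with hTdef
  -- columns owned by single-minded bidders kill all v-pieces
  have hPC : ∀ j ∈ C, ∀ i, P i j = ∅ := by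
    intro j hj i
    simp only [hCdef, Finset.mem_filter] at hj
    rw [Finset.eq_empty_iff_forall_notMem]
    intro r hr
    simp only [hPdef, Finset.mem_image, Finset.mem_filter] at hr
    obtain ⟨x, ⟨hxA, hx2⟩, hx1⟩ := hr
    have hx : x = (r, j) := Prod.ext hx1 hx2
    have hmem : (r, j) ∈ A' j := hj.2 (Finset.mem_image.2 ⟨r, Finset.mem_univ r, rfl⟩)
    exact (Finset.disjoint_left.1 (hAA' i j)) (hx ▸ hxA) hmem
  have hPdisj : ∀ (j : Fin c) (i i' : Fin n), i ≠ i' → Disjoint (P i j) (P i' j) := by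
    intro j i i' h
    rw [Finset.disjoint_left]
    intro r hr hr'
    simp only [hPdef, Finset.mem_image, Finset.mem_filter] at hr hr'
    obtain ⟨x, ⟨hxA, hx2⟩, hx1⟩ := hr
    obtain ⟨y, ⟨hyA, hy2⟩, hy1⟩ := hr'
    have hx : x = (r, j) := Prod.ext hx1 hx2
    have hy : y = (r, j) := Prod.ext hy1 hy2
    exact (Finset.disjoint_left.1 (hAA i i' h)) (hx ▸ hxA) (hy ▸ hyA)
  -- rewrite the v-sum
  have hsum1 : (∑ i : Fin n, lam * (X i).sup' (hXne i) (fun l =>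
        ∑ j ∈ S l, f i (((A i).filter (fun x => x.2 = j)).image Prod.fst)))
      = ∑ j : Fin c, lam * ∑ i ∈ T j, f i (P i j) := by
    have h1 : ∀ i : Fin n, lam * (X i).sup' (hXne i) (fun l =>
        ∑ j ∈ S l, f i (((A i).filter (fun x => x.2 = j)).image Prod.fst))
        = lam * ∑ j ∈ S (ℓ i), f i (P i j) := by
      intro i
      rw [← hℓval i]
    rw [Finset.sum_congr rfl (fun i _ => h1 i)]
    rw [← Finset.mul_sum, ← Finset.mul_sum]
    congr 1
    have h2 : ∀ i : Fin n, ∑ j ∈ S (ℓ i), f i (P i j)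
        = ∑ j : Fin c, if j ∈ S (ℓ i) then f i (P i j) else 0 := by
      intro i
      rw [Finset.sum_ite_mem, Finset.univ_inter]
    rw [Finset.sum_congr rfl (fun i _ => h2 i), Finset.sum_comm]
    refine Finset.sum_congr rfl (fun j _ => ?_)
    rw [hTdef]
    exact (Finset.sum_filter _ _).symm
  -- rewrite the u-sum
  have hsum2 : (∑ j : Fin c, ε * n *
      (if (Finset.univ.image (fun r : R => (r, j))) ⊆ A' j then (1 : ℝ) else 0))
      = ε * n * C.card := by
    rw [← Finset.mul_sum, Finset.sum_boole]
  rw [hsum1, hsum2]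
  -- per-column bound
  have hcol : ∀ j : Fin c, lam * ∑ i ∈ T j, f i (P i j)
      ≤ if j ∈ C then 0 else ((T j).card : ℝ) + (if (T j).Nonempty then 1 else 0) := by
    intro j
    by_cases hjC : j ∈ C
    · rw [if_pos hjC]
      have : ∀ i ∈ T j, f i (P i j) = 0 := fun i _ => by rw [hPC j hjC i, hf0]
      rw [Finset.sum_congr rfl this, Finset.sum_const_zero, mul_zero]
    · rw [if_neg hjC]
      rcases (T j).eq_empty_or_nonempty with he | hne
      · simp [he]
      · rw [if_pos hne]
        have h1 := hgap (T j) (fun i => P i j) (fun i _ i' _ h => hPdisj j i i' h)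
        have h2 := (le_div_iff₀ hlam0).1 h1
        linarith [h2]
  -- split columns into C and its complement
  have hsplit : ∑ j : Fin c, lam * ∑ i ∈ T j, f i (P i j)
      = (∑ j ∈ Finset.univ \ C, lam * ∑ i ∈ T j, f i (P i j))
        + ∑ j ∈ C, lam * ∑ i ∈ T j, f i (P i j) := by
    exact (Finset.sum_sdiff (Finset.subset_univ C)).symm
  have hCzero : ∑ j ∈ C, lam * ∑ i ∈ T j, f i (P i j) = 0 := by
    refine Finset.sum_eq_zero (fun j hj => ?_)
    have : ∀ i ∈ T j, f i (P i j) = 0 := fun i _ => by rw [hPC j hj i, hf0]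
    rw [Finset.sum_congr rfl this, Finset.sum_const_zero, mul_zero]
  have hDbound : ∑ j ∈ Finset.univ \ C, lam * ∑ i ∈ T j, f i (P i j)
      ≤ (∑ j ∈ Finset.univ \ C, ((T j).card : ℝ))
        + ∑ j ∈ Finset.univ \ C, (if (T j).Nonempty then (1:ℝ) else 0) := by
    rw [← Finset.sum_add_distrib]
    refine Finset.sum_le_sum (fun j hj => ?_)
    have hjC : j ∉ C := (Finset.mem_sdiff.1 hj).2
    have := hcol j
    rwa [if_neg hjC] at this
  -- count of nonempty-T columns outside C is at most c
  have hind : ∑ j ∈ Finset.univ \ C, (if (T j).Nonempty then (1:ℝ) else 0) ≤ c := by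
    calc ∑ j ∈ Finset.univ \ C, (if (T j).Nonempty then (1:ℝ) else 0)
        ≤ ∑ j ∈ Finset.univ \ C, (1:ℝ) := by
          refine Finset.sum_le_sum (fun j _ => ?_)
          split <;> norm_num
      _ = ((Finset.univ \ C).card : ℝ) := by rw [Finset.sum_const, nsmul_eq_mul, mul_one]
      _ ≤ c := by
          have h := Finset.card_le_univ (Finset.univ \ C)
          rw [Fintype.card_fin] at h
          exact_mod_cast h
  -- the scattering bound for T-cards
  have hTsum : ∑ j ∈ Finset.univ \ C, ((T j).card : ℝ)
      = ∑ l ∈ Finset.univ.image ℓ, (((Finset.univ \ C) ∩ S l).card : ℝ) := by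
    have h1 : ∀ j : Fin c, ((T j).card : ℝ)
        = ∑ i : Fin n, (if j ∈ S (ℓ i) then (1:ℝ) else 0) := by
      intro j
      rw [Finset.sum_boole, hTdef]
    rw [Finset.sum_congr rfl (fun j _ => h1 j), Finset.sum_comm]
    rw [Finset.sum_image (fun x _ y _ h => hℓinj h)]
    refine Finset.sum_congr rfl (fun i _ => ?_)
    rw [Finset.sum_ite_mem, Finset.sum_const, nsmul_eq_mul, mul_one]
  have hL : (Finset.univ.image ℓ).card = n := by
    rw [Finset.card_image_of_injective _ hℓinj, Finset.card_univ, Fintype.card_fin]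
  have hSbound := hS (Finset.univ \ C) (Finset.univ.image ℓ) hL
  -- cardinality arithmetic
  have hCle : C.card ≤ c := by
    have h := Finset.card_le_univ C
    rwa [Fintype.card_fin] at h
  have hDcard : (((Finset.univ \ C).card : ℝ)) = c - C.card := by
    rw [Finset.card_sdiff_of_subset (Finset.subset_univ C), Finset.card_univ, Fintype.card_fin]
    rw [Nat.cast_sub hCle]
  have hCnn : (0:ℝ) ≤ C.card := Nat.cast_nonneg _
  have hCleR : (C.card : ℝ) ≤ c := by exact_mod_cast hCle
  -- put everything together
  have key : ∑ j ∈ Finset.univ \ C, ((T j).card : ℝ)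
      ≤ ((c - (C.card:ℝ)) / c + 3 * ε) * (ε * n * c) := by
    rw [hTsum]
    calc ∑ l ∈ Finset.univ.image ℓ, (((Finset.univ \ C) ∩ S l).card : ℝ)
        ≤ (((Finset.univ \ C).card : ℝ) / c + 3 * ε) * (ε * n * c) := hSbound
      _ = ((c - (C.card:ℝ)) / c + 3 * ε) * (ε * n * c) := by rw [hDcard]
  have hdiv : ((c - (C.card:ℝ)) / c) * (ε * n * c) = ε * n * (c - C.card) := by
    field_simp
  have hε3c : ε ^ 3 * n * c = c := by rw [hε3, one_mul]
  calc (∑ j : Fin c, lam * ∑ i ∈ T j, f i (P i j)) + ε * n * C.card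
      = (∑ j ∈ Finset.univ \ C, lam * ∑ i ∈ T j, f i (P i j)) + ε * n * C.card := by
        rw [hsplit, hCzero, add_zero]
    _ ≤ ((∑ j ∈ Finset.univ \ C, ((T j).card : ℝ))
          + ∑ j ∈ Finset.univ \ C, (if (T j).Nonempty then (1:ℝ) else 0)) + ε * n * C.card := by
        linarith [hDbound]
    _ ≤ (((c - (C.card:ℝ)) / c + 3 * ε) * (ε * n * c) + c) + ε * n * C.card := by
        linarith [key, hind]
    _ ≤ (1 + 3 * ε + ε ^ 2) * (ε * n * c) := by nlinarith [hdiv, hε3c, hε0, hn0, hc0]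
end
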